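/- The Shannon entropy E[-log f(X)] of the unit-Gompertz distribution equals 1 - log(αβ) - (1+β)(e^α/β)Γ(0, α), where Γ(0,α) = ∫_α^∞ e^(-t)/t dt. -/

import Mathlib

open MeasureTheory Real Set Filter Topology

noncomputable def incGamma (s x : ℝ) : ℝ := ∫ u in Set.Ioi x, u ^ (s - 1) * Real.exp (-u)

lemma incG_cont : ContinuousOn (fun u : ℝ => u ^ ((0:ℝ) - 1) * Real.exp (-u)) {0}ᶜ := by
  intro u hu
  exact ((Real.continuousAt_rpow_const u _ (Or.inl hu)).mul
    (Real.continuous_exp.comp continuous_neg).continuousAt).continuousWithinAt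

set_option maxHeartbeats 2000000 in
lemma incG_integrableOn {a : ℝ} (ha : 0 < a) :
    IntegrableOn (fun u : ℝ => u ^ ((0:ℝ) - 1) * Real.exp (-u)) (Set.Ioi a) := by
  have hmeas : AEStronglyMeasurable (fun u : ℝ => u ^ ((0:ℝ) - 1) * Real.exp (-u))
      (volume.restrict (Set.Ioi a)) := by
    refine ContinuousOn.aestronglyMeasurable (incG_cont.mono ?_) measurableSet_Ioi
    intro u hu
    exact ne_of_gt (ha.trans hu)
  have hdom : IntegrableOn (fun u : ℝ => a⁻¹ * Real.exp (-u)) (Set.Ioi a) := by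
    have h := (exp_neg_integrableOn_Ioi a one_pos).const_mul a⁻¹
    simp at h
    exact h
  refine Integrable.mono hdom hmeas ?_
  filter_upwards [ae_restrict_mem measurableSet_Ioi] with u hu
  have hu0 : 0 < u := ha.trans hu
  have h1 : (0:ℝ) ≤ u ^ ((0:ℝ) - 1) := Real.rpow_nonneg hu0.le _
  rw [Real.norm_eq_abs, Real.norm_eq_abs, abs_of_nonneg (by positivity),
    abs_of_nonneg (by positivity)]
  apply mul_le_mul_of_nonneg_right _ (Real.exp_nonneg _)
  rw [show ((0:ℝ) - 1) = -1 by ring, Real.rpow_neg_one]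
  exact inv_anti₀ ha hu.le

lemma incGamma_split {a b : ℝ} (ha : 0 < a) (hab : a ≤ b) :
    incGamma 0 a = (∫ u in a..b, u ^ ((0:ℝ) - 1) * Real.exp (-u)) + incGamma 0 b := by
  have hb : 0 < b := ha.trans_le hab
  rw [intervalIntegral.integral_of_le hab, incGamma, incGamma,
    ← Set.Ioc_union_Ioi_eq_Ioi hab, setIntegral_union (Set.Ioc_disjoint_Ioi le_rfl)
      measurableSet_Ioi ((incG_integrableOn ha).mono_set Set.Ioc_subset_Ioi_self)
      (incG_integrableOn hb), integral_Ioc_eq_integral_Ioo]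

lemma incGamma_hasDerivAt {t : ℝ} (ht : 0 < t) :
    HasDerivAt (fun s => incGamma 0 s) (-(t ^ ((0:ℝ) - 1) * Real.exp (-t))) t := by
  set a := t / 2 with ha_def
  have ha : 0 < a := by positivity
  have hat : a < t := by rw [ha_def]; linarith
  have hmain : HasDerivAt (fun s => incGamma 0 a - ∫ u in a..s, u ^ ((0:ℝ) - 1) * Real.exp (-u))
      (-(t ^ ((0:ℝ) - 1) * Real.exp (-t))) t := by
    apply HasDerivAt.const_sub
    apply intervalIntegral.integral_hasDerivAt_right
    · exact (intervalIntegrable_iff_integrableOn_Ioc_of_le hat.le).2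
        ((incG_integrableOn ha).mono_set Set.Ioc_subset_Ioi_self)
    · exact ⟨{0}ᶜ, (isOpen_compl_singleton).mem_nhds ht.ne',
        (incG_cont.mono subset_rfl).aestronglyMeasurable isOpen_compl_singleton.measurableSet⟩
    · exact incG_cont.continuousAt ((isOpen_compl_singleton).mem_nhds ht.ne')
  apply hmain.congr_of_eventuallyEq
  filter_upwards [Ioi_mem_nhds hat] with s hs
  have := incGamma_split ha (le_of_lt hs)
  linarith

lemma incGamma_nonneg {t : ℝ} (ht : 0 < t) : 0 ≤ incGamma 0 t := by
  apply setIntegral_nonneg measurableSet_Ioi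
  intro u hu
  have hu0 : 0 < u := ht.trans hu
  have := Real.rpow_nonneg hu0.le ((0:ℝ)-1)
  positivity

lemma incGamma_le {t : ℝ} (ht : 1 ≤ t) : incGamma 0 t ≤ Real.exp (-t) := by
  have ht0 : 0 < t := lt_of_lt_of_le one_pos ht
  rw [← integral_exp_neg_Ioi t]
  apply setIntegral_mono_on ((incG_integrableOn ht0).mono_set subset_rfl)
    (exp_neg_integrableOn_Ioi t one_pos |>.congr ?_) measurableSet_Ioi ?_
  · filter_upwards with u; simp
  · intro u hu
    have hu1 : 1 ≤ u := ht.trans (le_of_lt hu)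
    have hu0 : 0 < u := lt_of_lt_of_le one_pos hu1
    rw [show ((0:ℝ) - 1) = -1 by ring, Real.rpow_neg_one]
    calc u⁻¹ * Real.exp (-u) ≤ 1 * Real.exp (-u) := by
          apply mul_le_mul_of_nonneg_right _ (Real.exp_nonneg _)
          exact inv_le_one_of_one_le₀ hu1
      _ = Real.exp (-u) := one_mul _

lemma incGamma_tendsto : Tendsto (fun t => incGamma 0 t) atTop (𝓝 0) := by
  apply tendsto_of_tendsto_of_tendsto_of_le_of_le' tendsto_const_nhds
    (tendsto_exp_atBot.comp tendsto_neg_atTop_atBot)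
  · filter_upwards [eventually_gt_atTop (0:ℝ)] with t ht using incGamma_nonneg ht
  · filter_upwards [eventually_ge_atTop (1:ℝ)] with t ht using incGamma_le ht

lemma H1 (p b : ℝ) (hb : 0 < b) :
    Tendsto (fun v : ℝ => v ^ p * Real.exp (-(b * v))) atTop (𝓝 0) := by
  have := tendsto_rpow_mul_exp_neg_mul_atTop_nhds_zero p b hb
  simpa [neg_mul] using this

lemma H2 (p b : ℝ) (hb : 0 < b) :
    Tendsto (fun v : ℝ => Real.log v * (v ^ p * Real.exp (-(b * v)))) atTop (𝓝 0) := by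
  apply tendsto_of_tendsto_of_tendsto_of_le_of_le' tendsto_const_nhds
      (show Tendsto (fun v : ℝ => v ^ (p+1) * Real.exp (-(b * v))) atTop (𝓝 0) from H1 _ _ hb)
  · filter_upwards [eventually_ge_atTop (1:ℝ)] with v hv
    have hv0 : 0 < v := lt_of_lt_of_le one_pos hv
    have h1 : 0 ≤ Real.log v := Real.log_nonneg hv
    have h2 : 0 ≤ v ^ p := Real.rpow_nonneg hv0.le _
    positivity
  · filter_upwards [eventually_ge_atTop (1:ℝ)] with v hv
    have hv0 : 0 < v := lt_of_lt_of_le one_pos hv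
    have h1 : Real.log v ≤ v := Real.log_le_sub_one_of_pos hv0 |>.trans (by linarith)
    have h2 : 0 ≤ v ^ p * Real.exp (-(b*v)) := by
      have := Real.rpow_nonneg hv0.le p; positivity
    calc Real.log v * (v ^ p * Real.exp (-(b*v))) ≤ v * (v ^ p * Real.exp (-(b*v))) :=
          mul_le_mul_of_nonneg_right h1 h2
      _ = v ^ (p+1) * Real.exp (-(b*v)) := by
          rw [Real.rpow_add hv0, Real.rpow_one]; ring

lemma tendsto_one_div_rpow {β : ℝ} (hβ : 0 < β) :
    Tendsto (fun x : ℝ => 1 / x ^ β) (𝓝[>] (0:ℝ)) atTop := by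
  have h1 : Tendsto (fun x : ℝ => x ^ β) (𝓝[>] (0:ℝ)) (𝓝[>] (0:ℝ)) := by
    rw [tendsto_nhdsWithin_iff]
    constructor
    · have := (Real.continuousAt_rpow_const 0 β (Or.inr hβ.le)).tendsto
      rw [Real.zero_rpow hβ.ne'] at this
      exact this.mono_left nhdsWithin_le_nhds
    · filter_upwards [self_mem_nhdsWithin] with x hx
      exact Real.rpow_pos_of_pos hx β
  have := h1.inv_tendsto_nhdsGT_zero
  apply this.congr
  intro x
  simp [one_div]


theorem unitGompertz_shannon_entropy (α β : ℝ) (hα : 0 < α) (hβ : 0 < β) :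
    let f : ℝ → ℝ := fun x => α * β * Real.exp (-α * (1 / x ^ β - 1)) / x ^ (1 + β)
    ∫ x in (0:ℝ)..1, (-Real.log (f x)) * f x
      = 1 - Real.log (α * β) - (1 + β) * (Real.exp α / β) * incGamma 0 α := by
  intro f
  set L := Real.log (α * β) with hL
  set Φ : ℝ → ℝ := fun y => (-L - α) * Real.exp (-α * (1 / y ^ β - 1))
      + α * ((1 / y ^ β + 1 / α) * Real.exp (-α * (1 / y ^ β - 1)))
      + (1 + β) * (Real.log y * Real.exp (-α * (1 / y ^ β - 1))
          - Real.exp α / β * incGamma 0 (α * (1 / y ^ β))) with hΦ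
  -- the derivative of Φ is the integrand, for all x > 0
  have hder : ∀ x : ℝ, 0 < x → HasDerivAt Φ ((-Real.log (f x)) * f x) x := by
    intro x hx
    have hc : 0 < x ^ β := Real.rpow_pos_of_pos hx β
    have hrp : HasDerivAt (fun y : ℝ => y ^ β) (β * x ^ (β - 1)) x :=
      Real.hasDerivAt_rpow_const (Or.inl hx.ne')
    set u' : ℝ := -(β * x ^ (β - 1)) / (x ^ β) ^ 2 with hu'
    have hu : HasDerivAt (fun y : ℝ => 1 / y ^ β) u' x := by
      have := hrp.inv hc.ne'
      simpa [one_div, Pi.inv_def] using this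
    have hE : HasDerivAt (fun y : ℝ => Real.exp (-α * (1 / y ^ β - 1)))
        (Real.exp (-α * (1 / x ^ β - 1)) * (-α * u')) x :=
      ((hu.sub_const 1).const_mul (-α)).exp
    have hwpos : 0 < α * (1 / x ^ β) := by positivity
    have hw : HasDerivAt (fun y : ℝ => α * (1 / y ^ β)) (α * u') x := hu.const_mul α
    have hI : HasDerivAt (fun y : ℝ => incGamma 0 (α * (1 / y ^ β)))
        (-((α * (1 / x ^ β)) ^ ((0:ℝ) - 1) * Real.exp (-(α * (1 / x ^ β)))) * (α * u')) x := by
      have := (incGamma_hasDerivAt hwpos).comp x hw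
      simpa [Function.comp_def] using this
    have hΦd : HasDerivAt Φ
        ((-L - α) * (Real.exp (-α * (1 / x ^ β - 1)) * (-α * u'))
          + α * (u' * Real.exp (-α * (1 / x ^ β - 1))
              + (1 / x ^ β + 1 / α) * (Real.exp (-α * (1 / x ^ β - 1)) * (-α * u')))
          + (1 + β) * ((x⁻¹ * Real.exp (-α * (1 / x ^ β - 1))
              + Real.log x * (Real.exp (-α * (1 / x ^ β - 1)) * (-α * u')))
              - Real.exp α / β * (-((α * (1 / x ^ β)) ^ ((0:ℝ) - 1)
                  * Real.exp (-(α * (1 / x ^ β)))) * (α * u')))) x :=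
      ((hE.const_mul (-L - α)).add (((hu.add_const (1/α)).mul hE).const_mul α)).add
        ((((Real.hasDerivAt_log hx.ne').mul hE).sub (hI.const_mul (Real.exp α / β))).const_mul
          (1+β))
    have hfx : f x = α * β * Real.exp (-α * (1 / x ^ β - 1)) / x ^ (1 + β) := rfl
    have h1β : x ^ (1 + β) = x * x ^ β := by
      rw [Real.rpow_add hx, Real.rpow_one]
    have hβx : x ^ (β - 1) = x ^ β / x := by
      rw [Real.rpow_sub hx, Real.rpow_one]
    have hexpv : Real.exp (-(α * (1 / x ^ β)))
        = Real.exp (-α * (1 / x ^ β - 1)) * Real.exp (-α) := by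
      rw [← Real.exp_add]; congr 1; ring
    have hlogf : Real.log (f x) = L + (-α * (1 / x ^ β - 1)) - (1 + β) * Real.log x := by
      rw [hfx, Real.log_div (by positivity) (Real.rpow_pos_of_pos hx _).ne',
        Real.log_mul (by positivity) (Real.exp_ne_zero _), Real.log_exp,
        Real.log_rpow hx, hL]
    have hval : ((-L - α) * (Real.exp (-α * (1 / x ^ β - 1)) * (-α * u'))
          + α * (u' * Real.exp (-α * (1 / x ^ β - 1))
              + (1 / x ^ β + 1 / α) * (Real.exp (-α * (1 / x ^ β - 1)) * (-α * u')))
          + (1 + β) * ((x⁻¹ * Real.exp (-α * (1 / x ^ β - 1))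
              + Real.log x * (Real.exp (-α * (1 / x ^ β - 1)) * (-α * u')))
              - Real.exp α / β * (-((α * (1 / x ^ β)) ^ ((0:ℝ) - 1)
                  * Real.exp (-(α * (1 / x ^ β)))) * (α * u'))))
        = (-Real.log (f x)) * f x := by
      rw [hlogf, hfx, h1β, hexpv, show ((0:ℝ) - 1) = -1 by ring, Real.rpow_neg_one,
        Real.exp_neg, hu', hβx]
      field_simp
      ring
    exact hval ▸ hΦd
  -- log of f
  have hlogf : ∀ x : ℝ, 0 < x →
      Real.log (f x) = L + (-α * (1 / x ^ β - 1)) - (1 + β) * Real.log x := by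
    intro x hx
    show Real.log (α * β * Real.exp (-α * (1 / x ^ β - 1)) / x ^ (1 + β)) = _
    rw [Real.log_div (by positivity) (Real.rpow_pos_of_pos hx _).ne',
      Real.log_mul (by positivity) (Real.exp_ne_zero _), Real.log_exp,
      Real.log_rpow hx, hL]
  -- limit of Φ at 1 from the left
  have hb1 : Tendsto Φ (𝓝[<] (1:ℝ)) (𝓝 (Φ 1)) :=
    (hder 1 one_pos).continuousAt.continuousWithinAt
  have hΦ1 : Φ 1 = 1 - L - (1 + β) * (Real.exp α / β) * incGamma 0 α := by
    rw [hΦ]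
    simp only [Real.one_rpow, Real.log_one, zero_mul, one_div, inv_one, mul_one, sub_self,
      mul_zero, neg_zero, Real.exp_zero, zero_sub]
    field_simp
    ring
  -- limits at 0 from the right
  have hu0 := tendsto_one_div_rpow hβ
  have hT : Tendsto (fun x : ℝ => Real.exp (-α * (1 / x ^ β - 1))) (𝓝[>] (0:ℝ)) (𝓝 0) := by
    have hlin : Tendsto (fun v : ℝ => -α * (v - 1)) atTop atBot := by
      have h1 : Tendsto (fun v : ℝ => v - 1) atTop atTop :=
        tendsto_atTop_add_const_right _ _ tendsto_id
      exact (tendsto_const_mul_atBot_of_neg (neg_lt_zero.mpr hα)).mpr h1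
    exact ((tendsto_exp_atBot.comp hlin).comp hu0).congr (fun x => rfl)
  have hG0 : Tendsto (fun v : ℝ => (v + 1/α) * Real.exp (-α * (v - 1))) atTop (𝓝 0) := by
    have h : Tendsto (fun v : ℝ => Real.exp α * (v ^ (1:ℝ) * Real.exp (-(α * v)))
          + Real.exp α / α * (v ^ (0:ℝ) * Real.exp (-(α * v)))) atTop
        (𝓝 (Real.exp α * 0 + Real.exp α / α * 0)) :=
      ((H1 1 α hα).const_mul _).add ((H1 0 α hα).const_mul _)
    rw [mul_zero, mul_zero, add_zero] at h
    apply h.congr'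
    filter_upwards [eventually_gt_atTop (0:ℝ)] with v hv
    rw [Real.rpow_one, Real.rpow_zero, show -α * (v - 1) = -(α * v) + α by ring, Real.exp_add]
    field_simp
  have hGcomp : Tendsto (fun x : ℝ => (1 / x ^ β + 1 / α) * Real.exp (-α * (1 / x ^ β - 1)))
      (𝓝[>] (0:ℝ)) (𝓝 0) := (hG0.comp hu0).congr (fun x => rfl)
  have hlogE : Tendsto (fun x : ℝ => Real.log x * Real.exp (-α * (1 / x ^ β - 1)))
      (𝓝[>] (0:ℝ)) (𝓝 0) := by
    have h : Tendsto (fun v : ℝ => (-(1/β) * Real.exp α)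
          * (Real.log v * (v ^ (0:ℝ) * Real.exp (-(α * v))))) atTop
        (𝓝 ((-(1/β) * Real.exp α) * 0)) := (H2 0 α hα).const_mul _
    rw [mul_zero] at h
    apply (h.comp hu0).congr'
    filter_upwards [self_mem_nhdsWithin] with x hx
    have hx0 : (0:ℝ) < x := hx
    have hc : (0:ℝ) < x ^ β := Real.rpow_pos_of_pos hx0 β
    show (-(1/β) * Real.exp α)
        * (Real.log (1 / x ^ β) * ((1 / x ^ β) ^ (0:ℝ) * Real.exp (-(α * (1 / x ^ β))))) = _
    have hlogv : Real.log (1 / x ^ β) = -(β * Real.log x) := by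
      rw [one_div, Real.log_inv, Real.log_rpow hx0]
    have hexpv2 : Real.exp (-(α * (1 / x ^ β)))
        = Real.exp (-α * (1 / x ^ β - 1)) * Real.exp (-α) := by
      rw [← Real.exp_add]; congr 1; ring
    rw [Real.rpow_zero, hlogv, hexpv2, Real.exp_neg]
    field_simp
  have hΓ0 : Tendsto (fun x : ℝ => incGamma 0 (α * (1 / x ^ β))) (𝓝[>] (0:ℝ)) (𝓝 0) := by
    have hw : Tendsto (fun x : ℝ => α * (1 / x ^ β)) (𝓝[>] (0:ℝ)) atTop :=
      Tendsto.const_mul_atTop hα hu0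
    exact (incGamma_tendsto.comp hw).congr (fun x => rfl)
  have ha0 : Tendsto Φ (𝓝[>] (0:ℝ)) (𝓝 0) := by
    have h := ((hT.const_mul (-L - α)).add (hGcomp.const_mul α)).add
      ((hlogE.sub (hΓ0.const_mul (Real.exp α / β))).const_mul (1 + β))
    rw [hΦ]
    simpa using h
  -- the integrand tends to 0 at 0⁺
  have hg0 : Tendsto (fun x => (-Real.log (f x)) * f x) (𝓝[>] (0:ℝ)) (𝓝 0) := by
    set q : ℝ := (1 + β) / β with hq
    have hψ : Tendsto (fun v : ℝ =>
        ((-L - α) * (α * β * Real.exp α)) * (v ^ q * Real.exp (-(α * v)))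
        + (α * (α * β * Real.exp α)) * (v ^ (q+1) * Real.exp (-(α * v)))
        + (-((1 + β) * (α * Real.exp α))) * (Real.log v * (v ^ q * Real.exp (-(α * v)))))
        atTop (𝓝 0) := by
      have h := (((H1 q α hα).const_mul ((-L - α) * (α * β * Real.exp α))).add
        ((H1 (q+1) α hα).const_mul (α * (α * β * Real.exp α)))).add
        ((H2 q α hα).const_mul (-((1 + β) * (α * Real.exp α))))
      simpa using h
    apply (hψ.comp hu0).congr'
    filter_upwards [self_mem_nhdsWithin] with x hx
    have hx0 : (0:ℝ) < x := hx
    have hc : (0:ℝ) < x ^ β := Real.rpow_pos_of_pos hx0 β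
    have hv0 : (0:ℝ) < 1 / x ^ β := by positivity
    have hβq : β * q = 1 + β := by rw [hq]; field_simp
    have hiq : (1 / x ^ β) ^ q = (x ^ (1 + β))⁻¹ := by
      rw [one_div, ← Real.rpow_neg hx0.le, ← Real.rpow_mul hx0.le, ← Real.rpow_neg hx0.le]
      congr 1
      rw [← hβq]; ring
    have hiq1 : (1 / x ^ β) ^ (q + 1) = (1 / x ^ β) * (x ^ (1 + β))⁻¹ := by
      rw [Real.rpow_add hv0, Real.rpow_one, hiq]; ring
    have hlogv : Real.log (1 / x ^ β) = -(β * Real.log x) := by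
      rw [one_div, Real.log_inv, Real.log_rpow hx0]
    have hexpv : Real.exp (-(α * (1 / x ^ β)))
        = Real.exp (-α * (1 / x ^ β - 1)) * Real.exp (-α) := by
      rw [← Real.exp_add]; congr 1; ring
    show ((-L - α) * (α * β * Real.exp α)) * ((1 / x ^ β) ^ q * Real.exp (-(α * (1 / x ^ β))))
        + (α * (α * β * Real.exp α)) * ((1 / x ^ β) ^ (q+1) * Real.exp (-(α * (1 / x ^ β))))
        + (-((1 + β) * (α * Real.exp α)))
            * (Real.log (1 / x ^ β) * ((1 / x ^ β) ^ q * Real.exp (-(α * (1 / x ^ β)))))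
        = (-Real.log (f x)) * f x
    rw [hiq, hiq1, hlogv, hexpv, hlogf x hx0,
      show f x = α * β * Real.exp (-α * (1 / x ^ β - 1)) / x ^ (1 + β) from rfl,
      Real.exp_neg]
    field_simp
    ring
  -- continuity of the integrand on [0,1]
  have hgc : ContinuousOn (fun x => (-Real.log (f x)) * f x) (Icc (0:ℝ) 1) := by
    intro x hx
    rcases eq_or_lt_of_le hx.1 with rfl | hxpos
    · have hf00 : f 0 = 0 := by
        show α * β * Real.exp (-α * (1 / (0:ℝ) ^ β - 1)) / (0:ℝ) ^ (1 + β) = 0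
        rw [Real.zero_rpow (by positivity : (0:ℝ) < 1 + β).ne', div_zero]
      have hg00 : (fun x => (-Real.log (f x)) * f x) 0 = 0 := by
        show (-Real.log (f 0)) * f 0 = 0
        rw [hf00, mul_zero]
      rw [← continuousWithinAt_diff_self]
      unfold ContinuousWithinAt
      rw [hg00]
      refine hg0.mono_left (nhdsWithin_mono _ ?_)
      intro y hy
      exact lt_of_le_of_ne hy.1.1 (Ne.symm (by simpa using hy.2))
    · have hrc : ContinuousAt (fun y : ℝ => y ^ β) x :=
        Real.continuousAt_rpow_const x β (Or.inl hxpos.ne')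
      have hrc2 : ContinuousAt (fun y : ℝ => y ^ (1 + β)) x :=
        Real.continuousAt_rpow_const x (1 + β) (Or.inl hxpos.ne')
      have hinner : ContinuousAt (fun y : ℝ => -α * (1 / y ^ β - 1)) x :=
        continuousAt_const.mul ((continuousAt_const.div hrc
          (Real.rpow_pos_of_pos hxpos β).ne').sub continuousAt_const)
      have hcexp : ContinuousAt (fun y : ℝ => Real.exp (-α * (1 / y ^ β - 1))) x :=
        Real.continuous_exp.continuousAt.comp hinner
      have hfc : ContinuousAt f x :=
        (continuousAt_const.mul hcexp).div hrc2 (Real.rpow_pos_of_pos hxpos _).ne'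
      have hfpos : 0 < f x := div_pos (by positivity) (Real.rpow_pos_of_pos hxpos _)
      exact (((hfc.log hfpos.ne').neg).mul hfc).continuousWithinAt
  have hgint : IntervalIntegrable (fun x => (-Real.log (f x)) * f x) volume 0 1 := by
    apply ContinuousOn.intervalIntegrable
    rwa [uIcc_of_le zero_le_one]
  have key := intervalIntegral.integral_eq_sub_of_hasDerivAt_of_tendsto (f := Φ)
      (f' := fun x => (-Real.log (f x)) * f x) one_pos (fun x hx => hder x hx.1) hgint ha0 hb1
  rw [key, hΦ1]
  ring
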